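/- Assume the quadratic maximum setup: u, v : ℝ^d → ℝ are bounded Borel measurable, ε > 0, and ψ_ε(x,y) := u(x) − v(y) − ε⁻²‖x−y‖² attains a global maximum at (x̄, ȳ); set a := x̄ − ȳ. Let γ ∈ (0,1], C̃₀ > 0, and let j : ℝ^d × ℝ^d → ℝ^d be Borel measurable with ‖j(x,z) − j(y,z)‖ ≤ C̃₀‖x−y‖^γ for all x, y and all z ∉ B. Let μ be a nonnegative Borel measure on ℝ^d with μ(ℝ^d \ B) < ∞, the integrands below being μ-integrable on ℝ^d \ B. Then ∫_{ℝ^d \ B} ( u(x̄+j(x̄,z)) − u(x̄) ) dμ(z) − ∫_{ℝ^d \ B} ( v(ȳ+j(ȳ,z)) − v(ȳ) ) dμ(z) ≤ ( C̃₀²‖a‖^{2γ} + 2C̃₀‖a‖^{γ+1} ) ε⁻² μ(ℝ^d \ B). -/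

import Mathlib

open MeasureTheory RealInnerProductSpace Set

/-- **Quadratic estimate at infinity for Lévy–Itô operators (Lemma est_Tq3).**
In the quadratic maximum setup, with `‖j(x,z) − j(y,z)‖ ≤ C̃₀‖x−y‖^γ` outside `B`, the
difference of the nonlocal terms over `ℝ^d \ B` is bounded by
`(C̃₀²‖a‖^{2γ} + 2C̃₀‖a‖^{γ+1})ε⁻²μ(ℝ^d \ B)`. -/
theorem quadratic_estimate_tail {d : ℕ}
    (u v : EuclideanSpace ℝ (Fin d) → ℝ)
    (hum : Measurable u) (hvm : Measurable v)
    (hub : ∃ C, ∀ x, |u x| ≤ C) (hvb : ∃ C, ∀ x, |v x| ≤ C)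
    (ε : ℝ) (hε : 0 < ε)
    (xb yb : EuclideanSpace ℝ (Fin d))
    (hmax : ∀ x y, u x - v y - (ε ^ 2)⁻¹ * ‖x - y‖ ^ 2
      ≤ u xb - v yb - (ε ^ 2)⁻¹ * ‖xb - yb‖ ^ 2)
    (a : EuclideanSpace ℝ (Fin d)) (ha : a = xb - yb)
    (γ Ct₀ : ℝ) (hγ : γ ∈ Ioc (0:ℝ) 1) (hCt₀ : 0 < Ct₀)
    (j : EuclideanSpace ℝ (Fin d) → EuclideanSpace ℝ (Fin d) → EuclideanSpace ℝ (Fin d))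
    (hj : Measurable (Function.uncurry j))
    (hlip' : ∀ x y z, z ∉ Metric.closedBall (0 : EuclideanSpace ℝ (Fin d)) 1 →
      ‖j x z - j y z‖ ≤ Ct₀ * ‖x - y‖ ^ γ)
    (μ : Measure (EuclideanSpace ℝ (Fin d)))
    (hμ : μ (Metric.closedBall (0 : EuclideanSpace ℝ (Fin d)) 1)ᶜ ≠ ⊤)
    (hintu : IntegrableOn (fun z => u (xb + j xb z) - u xb)
      (Metric.closedBall (0 : EuclideanSpace ℝ (Fin d)) 1)ᶜ μ)
    (hintv : IntegrableOn (fun z => v (yb + j yb z) - v yb)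
      (Metric.closedBall (0 : EuclideanSpace ℝ (Fin d)) 1)ᶜ μ) :
    (∫ z in (Metric.closedBall (0 : EuclideanSpace ℝ (Fin d)) 1)ᶜ,
        (u (xb + j xb z) - u xb) ∂μ)
      - ∫ z in (Metric.closedBall (0 : EuclideanSpace ℝ (Fin d)) 1)ᶜ,
          (v (yb + j yb z) - v yb) ∂μ
    ≤ (Ct₀ ^ 2 * ‖a‖ ^ (2 * γ) + 2 * Ct₀ * ‖a‖ ^ (γ + 1)) * (ε ^ 2)⁻¹
        * (μ (Metric.closedBall (0 : EuclideanSpace ℝ (Fin d)) 1)ᶜ).toReal := by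

  obtain ⟨hγ0, hγ1⟩ := hγ
  set S := (Metric.closedBall (0 : EuclideanSpace ℝ (Fin d)) 1)ᶜ with hS
  set L := Ct₀ * ‖a‖ ^ γ with hLdef
  have hL0 : 0 ≤ L := mul_nonneg hCt₀.le (Real.rpow_nonneg (norm_nonneg a) γ)
  have hKey : Ct₀ ^ 2 * ‖a‖ ^ (2 * γ) + 2 * Ct₀ * ‖a‖ ^ (γ + 1)
      = L ^ 2 + 2 * ‖a‖ * L := by
    have h1 : ‖a‖ ^ (2 * γ) = ‖a‖ ^ γ * ‖a‖ ^ γ := by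
      rw [two_mul, Real.rpow_add' (norm_nonneg a) (by positivity)]
    have h2 : ‖a‖ ^ (γ + 1) = ‖a‖ ^ γ * ‖a‖ := by
      rw [Real.rpow_add' (norm_nonneg a) (by positivity), Real.rpow_one]
    rw [h1, h2, hLdef]; ring
  have hε2 : (0:ℝ) < (ε ^ 2)⁻¹ := by positivity
  have hpt : ∀ z ∈ S, (u (xb + j xb z) - u xb) - (v (yb + j yb z) - v yb)
      ≤ (L ^ 2 + 2 * ‖a‖ * L) * (ε ^ 2)⁻¹ := by
    intro z hz
    set w := j xb z - j yb z with hw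
    have hjd : ‖w‖ ≤ L := by
      have h := hlip' xb yb z hz
      rwa [← ha] at h
    have hm := hmax (xb + j xb z) (yb + j yb z)
    have hnorm : (xb + j xb z) - (yb + j yb z) = a + w := by
      rw [ha, hw]; abel
    rw [hnorm, ← ha] at hm
    have hexp : ‖a + w‖ ^ 2 = ‖a‖ ^ 2 + 2 * ⟪a, w⟫ + ‖w‖ ^ 2 :=
      norm_add_sq_real a w
    have h1 : ⟪a, w⟫ ≤ ‖a‖ * L :=
      (real_inner_le_norm a w).trans
        (mul_le_mul_of_nonneg_left hjd (norm_nonneg a))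
    have h2 : ‖w‖ ^ 2 ≤ L ^ 2 := by nlinarith [norm_nonneg w]
    nlinarith [mul_le_mul_of_nonneg_left h1 hε2.le,
      mul_le_mul_of_nonneg_left h2 hε2.le]
  have hmeas : MeasurableSet S := measurableSet_closedBall.compl
  rw [← integral_sub hintu hintv]
  calc ∫ z in S, ((u (xb + j xb z) - u xb) - (v (yb + j yb z) - v yb)) ∂μ
      ≤ ∫ _z in S, ((L ^ 2 + 2 * ‖a‖ * L) * (ε ^ 2)⁻¹) ∂μ :=
        setIntegral_mono_on (hintu.sub hintv)
          (integrableOn_const hμ) hmeas hpt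
    _ = (Ct₀ ^ 2 * ‖a‖ ^ (2 * γ) + 2 * Ct₀ * ‖a‖ ^ (γ + 1)) * (ε ^ 2)⁻¹
        * (μ S).toReal := by
        rw [setIntegral_const, smul_eq_mul, hKey, measureReal_def]; ring
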